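/- Let 𝟏 = (1,1,1,...) ∈ {1,2}^{ℤ_{>0}} and let X_𝟏 = {0} ∪ ⋃_{n≥1} [1/2^n, 1/2^n + 1/2^{n+1}]. Then the metric space (ℳ_{X_𝟏}, d_L) of isometry classes of compact metric spaces at finite Lipschitz distance from X_𝟏 is not separable. -/

import Mathlib

open ENNReal

/-- The dilation (smallest Lipschitz constant) of a map between metric spaces. -/
noncomputable def dil {X : Type*} {Y : Type*} [MetricSpace X] [MetricSpace Y]
    (f : X → Y) : ℝ :=
  sInf {K : ℝ | ∀ x y : X, dist (f x) (f y) ≤ K * dist x y}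

/-- A bijection is a bi-Lipschitz homeomorphism if it and its inverse are Lipschitz. -/
def IsBiLipschitzEquiv {X : Type*} {Y : Type*} [MetricSpace X] [MetricSpace Y]
    (f : X ≃ Y) : Prop :=
  (∃ K : NNReal, LipschitzWith K f) ∧ (∃ K : NNReal, LipschitzWith K f.symm)

/-- The quantity `|log dil f| + |log dil f⁻¹|`. -/
noncomputable def lipCost {X : Type*} {Y : Type*} [MetricSpace X] [MetricSpace Y]
    (f : X ≃ Y) : ℝ :=
  |Real.log (dil (f : X → Y))| + |Real.log (dil (f.symm : Y → X))|

/-- The Lipschitz distance: the infimum of `|log dil f| + |log dil f⁻¹|` over all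
bi-Lipschitz homeomorphisms `f : X → Y` (`∞` if none exists). -/
noncomputable def lipDist (X : Type*) (Y : Type*) [MetricSpace X] [MetricSpace Y] : ℝ≥0∞ :=
  ⨅ (f : X ≃ Y) (_ : IsBiLipschitzEquiv f), ENNReal.ofReal (lipCost f)

/-- The interval `I(n,m) = [1/2^n, 1/2^n + 1/2^(n+m)]`. -/
def Iset (n m : ℕ) : Set ℝ := Set.Icc ((1:ℝ)/2^n) ((1:ℝ)/2^n + 1/2^(n+m))

/-- `X_u = {0} ∪ ⋃_{n ≥ 1} I(n, u_n)`, with the Euclidean metric inherited from `ℝ`. -/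
def Xset (u : ℕ+ → ℕ) : Set ℝ := {0} ∪ ⋃ n : ℕ+, Iset (n : ℕ) (u n)

/-- A bundled compact metric space. -/
structure CptMet where
  carrier : Type
  [inst : MetricSpace carrier]
  [cpt : CompactSpace carrier]

attribute [instance] CptMet.inst CptMet.cpt

namespace MX1aux

open Set

lemma two_pow_pos (n : ℕ) : (0:ℝ) < 2^n := by positivity

lemma half_le_half {k m : ℕ} (h : k ≤ m) : (1:ℝ)/2^m ≤ 1/2^k :=
  one_div_le_one_div_of_le (by positivity) (by exact pow_le_pow_right₀ one_le_two h)

lemma Iset_sub {n m : ℕ} (hm : 1 ≤ m) :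
    Iset n m ⊆ Set.Icc ((1:ℝ)/2^n) ((3/2) * (1/2^n)) := by
  rintro x ⟨h1, h2⟩
  refine ⟨h1, ?_⟩
  have h3 : (1:ℝ)/2^(n+m) ≤ 1/2^(n+1) := half_le_half (by omega)
  have e : (1:ℝ)/2^(n+1) = (1/2)*(1/2^n) := by
    rw [pow_succ]; ring
  nlinarith [two_pow_pos n]

lemma mem_Iset_left (n m : ℕ) : (1:ℝ)/2^n ∈ Iset n m :=
  ⟨le_refl _, le_add_of_nonneg_right (by positivity)⟩

lemma mem_Iset_right (n m : ℕ) : (1:ℝ)/2^n + 1/2^(n+m) ∈ Iset n m :=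
  ⟨le_add_of_nonneg_right (by positivity), le_refl _⟩

lemma Iset_pos {n m : ℕ} {x : ℝ} (hx : x ∈ Iset n m) : 0 < x :=
  lt_of_lt_of_le (by positivity) hx.1

lemma abs_sub_le_of_mem_Iset {n m : ℕ} {x y : ℝ} (hx : x ∈ Iset n m)
    (hy : y ∈ Iset n m) : |x - y| ≤ 1/2^(n+m) := by
  rw [abs_sub_le_iff]
  obtain ⟨hx1, hx2⟩ := hx; obtain ⟨hy1, hy2⟩ := hy
  constructor <;> linarith

lemma Iset_disjoint {n m a b : ℕ} (ha : 1 ≤ a) (hb : 1 ≤ b) (hnm : n ≠ m) {x : ℝ}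
    (hx : x ∈ Iset n a) : x ∉ Iset m b := by
  intro hy
  have h1 := Iset_sub ha hx
  have h2 := Iset_sub hb hy
  rcases lt_or_gt_of_ne hnm with h | h
  · -- n < m : x ≥ 1/2^n, but x ≤ (3/2)/2^m ≤ (3/4)/2^n
    have h3 : (1:ℝ)/2^m ≤ 1/2^(n+1) := half_le_half (by omega)
    have e : (1:ℝ)/2^(n+1) = (1/2)*(1/2^n) := by rw [pow_succ]; ring
    have := h1.1; have := h2.2
    nlinarith [one_div_pos.mpr (two_pow_pos n)]
  · have h3 : (1:ℝ)/2^n ≤ 1/2^(m+1) := half_le_half (by omega)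
    have e : (1:ℝ)/2^(m+1) = (1/2)*(1/2^m) := by rw [pow_succ]; ring
    have := h2.1; have := h1.2
    nlinarith [one_div_pos.mpr (two_pow_pos m)]

lemma mem_Xset_iff {u : ℕ+ → ℕ} {x : ℝ} :
    x ∈ Xset u ↔ x = 0 ∨ ∃ n : ℕ+, x ∈ Iset (n : ℕ) (u n) := by
  simp [Xset, Set.mem_union, Set.mem_iUnion, Set.mem_singleton_iff]

lemma zero_mem_Xset (u : ℕ+ → ℕ) : (0:ℝ) ∈ Xset u := mem_Xset_iff.mpr (Or.inl rfl)

lemma Iset_sub_Xset (u : ℕ+ → ℕ) (n : ℕ+) : Iset (n : ℕ) (u n) ⊆ Xset u :=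
  fun x hx => mem_Xset_iff.mpr (Or.inr ⟨n, hx⟩)

lemma Xset_sub_Icc (u : ℕ+ → ℕ) (hu : ∀ n, 1 ≤ u n) : Xset u ⊆ Set.Icc 0 1 := by
  intro x hx
  rcases mem_Xset_iff.mp hx with rfl | ⟨n, hn⟩
  · exact ⟨le_refl _, zero_le_one⟩
  · have h1 := Iset_sub (hu n) hn
    have h2 : (1:ℝ)/2^(n:ℕ) ≤ 1/2^1 := half_le_half n.one_le
    constructor
    · linarith [(Iset_pos hn).le, h1.1]
    · nlinarith [h1.2, two_pow_pos (n:ℕ)]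

end MX1aux

namespace MX1aux

open Set

lemma isClosed_Xset (u : ℕ+ → ℕ) (hu : ∀ n, 1 ≤ u n) : IsClosed (Xset u) := by
  rw [← closure_subset_iff_isClosed]
  intro x hx
  have hx01 : x ∈ Set.Icc (0:ℝ) 1 :=
    closure_minimal (Xset_sub_Icc u hu) isClosed_Icc hx
  rcases eq_or_lt_of_le hx01.1 with h0 | hpos
  · exact h0 ▸ zero_mem_Xset u
  obtain ⟨N, hN⟩ : ∃ N : ℕ, (1:ℝ)/2^N < x := by
    obtain ⟨N, hN⟩ := exists_pow_lt_of_lt_one hpos (by norm_num : (1/2 : ℝ) < 1)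
    exact ⟨N, by rwa [div_pow, one_pow] at hN⟩
  set A : Set ℝ := ⋃ n ∈ {n : ℕ+ | (n:ℕ) ≤ N}, Iset (n:ℕ) (u n) with hA
  set B : Set ℝ := ⋃ n ∈ {n : ℕ+ | N < (n:ℕ)}, Iset (n:ℕ) (u n) with hB
  have hsplit : Xset u = ({0} ∪ A) ∪ B := by
    ext y
    simp only [Xset, hA, hB, Set.mem_union, Set.mem_singleton_iff, Set.mem_iUnion,
      Set.mem_setOf_eq]
    constructor
    · rintro (h | ⟨n, hn⟩)
      · exact Or.inl (Or.inl h)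
      · rcases le_or_gt (n:ℕ) N with h' | h'
        · exact Or.inl (Or.inr ⟨n, h', hn⟩)
        · exact Or.inr ⟨n, h', hn⟩
    · rintro ((h | ⟨n, _, hn⟩) | ⟨n, _, hn⟩)
      · exact Or.inl h
      · exact Or.inr ⟨n, hn⟩
      · exact Or.inr ⟨n, hn⟩
  have hBsub : B ⊆ Set.Icc 0 ((3/4) * (1/2^N)) := by
    rintro y hy
    simp only [hB, Set.mem_iUnion, Set.mem_setOf_eq] at hy
    obtain ⟨n, hn, hyn⟩ := hy
    have h1 := Iset_sub (hu n) hyn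
    have h2 : (1:ℝ)/2^(n:ℕ) ≤ 1/2^(N+1) := half_le_half (by omega)
    have e : (1:ℝ)/2^(N+1) = (1/2)*(1/2^N) := by rw [pow_succ]; ring
    constructor
    · linarith [(Iset_pos hyn).le]
    · nlinarith [h1.2, h1.1]
  have hAclosed : IsClosed ({(0:ℝ)} ∪ A) := by
    apply IsClosed.union isClosed_singleton
    apply Set.Finite.isClosed_biUnion
    · have : {n : ℕ+ | (n:ℕ) ≤ N} = ((↑) : ℕ+ → ℕ) ⁻¹' (Set.Iic N) := rfl
      rw [this]
      exact Set.Finite.preimage (Set.injOn_of_injective PNat.coe_injective)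
        (Set.finite_Iic N)
    · intro n _
      exact isClosed_Icc
  rw [hsplit, closure_union] at hx
  rcases hx with hx | hx
  · rw [hAclosed.closure_eq] at hx
    rw [hsplit]
    exact Or.inl hx
  · exfalso
    have := closure_minimal hBsub isClosed_Icc hx
    have h2 : (0:ℝ) < 1/2^N := by positivity
    have := this.2
    linarith [hN]

lemma compactSpace_Xset (u : ℕ+ → ℕ) (hu : ∀ n, 1 ≤ u n) :
    CompactSpace ↥(Xset u) :=
  isCompact_iff_compactSpace.mp
    (isCompact_Icc.of_isClosed_subset (isClosed_Xset u hu) (Xset_sub_Icc u hu))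

lemma not_mem_Xset_low (u : ℕ+ → ℕ) (hu : ∀ n, 1 ≤ u n) (m : ℕ) :
    (7/8) * ((1:ℝ)/2^m) ∉ Xset u := by
  intro h
  have hpos : (0:ℝ) < 1/2^m := by positivity
  rcases mem_Xset_iff.mp h with h0 | ⟨k, hk⟩
  · nlinarith
  · have h1 := Iset_sub (hu k) hk
    rcases le_or_gt (k:ℕ) m with hkm | hkm
    · have h2 : (1:ℝ)/2^m ≤ 1/2^(k:ℕ) := half_le_half hkm
      linarith [h1.1]
    · have h2 : (1:ℝ)/2^(k:ℕ) ≤ 1/2^(m+1) := half_le_half (by omega)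
      have e : (1:ℝ)/2^(m+1) = (1/2)*(1/2^m) := by rw [pow_succ]; ring
      nlinarith [h1.2, h1.1]

lemma not_mem_Xset_high (u : ℕ+ → ℕ) (hu : ∀ n, 1 ≤ u n) (m : ℕ) :
    (7/4) * ((1:ℝ)/2^m) ∉ Xset u := by
  intro h
  have hpos : (0:ℝ) < 1/2^m := by positivity
  rcases mem_Xset_iff.mp h with h0 | ⟨k, hk⟩
  · nlinarith
  · have h1 := Iset_sub (hu k) hk
    rcases le_or_gt m (k:ℕ) with hkm | hkm
    · have h2 : (1:ℝ)/2^(k:ℕ) ≤ 1/2^m := half_le_half hkm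
      nlinarith [h1.2]
    · have h2 : (1:ℝ)/2^m ≤ 1/2^((k:ℕ)+1) := half_le_half (by omega)
      have e : (1:ℝ)/2^((k:ℕ)+1) = (1/2)*(1/2^(k:ℕ)) := by rw [pow_succ]; ring
      nlinarith [h1.1]

lemma ordConn_sub_Iset {u : ℕ+ → ℕ} (hu : ∀ n, 1 ≤ u n) {J : Set ℝ}
    (hJ : Set.OrdConnected J) (hJX : J ⊆ Xset u) {m : ℕ+} {w : ℝ}
    (hw : w ∈ J) (hwm : w ∈ Iset (m:ℕ) (u m)) :
    ∀ z ∈ J, z ∈ Iset (m:ℕ) (u m) := by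
  intro z hz
  have hposm : (0:ℝ) < 1/2^(m:ℕ) := by positivity
  have hwb := Iset_sub (hu m) hwm
  rcases mem_Xset_iff.mp (hJX hz) with rfl | ⟨k, hk⟩
  · exfalso
    apply not_mem_Xset_low u hu (m:ℕ)
    apply hJX
    apply hJ.out hz hw
    constructor <;> [nlinarith; nlinarith [hwb.1]]
  rcases eq_or_ne k m with rfl | hkm
  · exact hk
  exfalso
  have hkb := Iset_sub (hu k) hk
  rcases lt_or_gt_of_ne (fun e => hkm (PNat.coe_injective e) : (k:ℕ) ≠ (m:ℕ)) with h | h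
  · -- k < m : z is to the right of the window; high point between w and z
    apply not_mem_Xset_high u hu (m:ℕ)
    apply hJX
    apply hJ.out hw hz
    have h2 : (1:ℝ)/2^(k:ℕ) ≥ 2 * (1/2^(m:ℕ)) := by
      have := half_le_half (show (k:ℕ)+1 ≤ (m:ℕ) by omega)
      have e : (1:ℝ)/2^((k:ℕ)+1) = (1/2)*(1/2^(k:ℕ)) := by rw [pow_succ]; ring
      nlinarith
    constructor <;> nlinarith [hkb.1, hwb.2]
  · -- m < k : z is to the left; low point between z and w
    apply not_mem_Xset_low u hu (m:ℕ)
    apply hJX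
    apply hJ.out hz hw
    have h2 : (1:ℝ)/2^(k:ℕ) ≤ (1/2) * (1/2^(m:ℕ)) := by
      have := half_le_half (show (m:ℕ)+1 ≤ (k:ℕ) by omega)
      have e : (1:ℝ)/2^((m:ℕ)+1) = (1/2)*(1/2^(m:ℕ)) := by rw [pow_succ]; ring
      nlinarith
    constructor <;> nlinarith [hkb.2, hwb.1]

end MX1aux

namespace MX1aux

open Set

lemma exists_target {u v : ℕ+ → ℕ} (hu : ∀ n, 1 ≤ u n) (hv : ∀ n, 1 ≤ v n)
    (h : ↥(Xset u) ≃ ↥(Xset v)) (hc : Continuous (h : ↥(Xset u) → ↥(Xset v)))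
    (n : ℕ+) :
    ∃ m : ℕ+, ∀ x : ↥(Xset u), (x:ℝ) ∈ Iset (n:ℕ) (u n) →
      ((h x : ℝ) ∈ Iset (m:ℕ) (v m)) := by
  have hsub : Iset (n:ℕ) (u n) ⊆ Xset u := Iset_sub_Xset u n
  haveI : PreconnectedSpace ↥(Iset (n:ℕ) (u n)) :=
    Subtype.preconnectedSpace isPreconnected_Icc
  set φ : ↥(Iset (n:ℕ) (u n)) → ℝ :=
    fun z => ((h (Set.inclusion hsub z) : ℝ)) with hφdef
  have hφ : Continuous φ :=
    continuous_subtype_val.comp (hc.comp (continuous_inclusion hsub))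
  have hJconn : IsPreconnected (Set.range φ) := isPreconnected_range hφ
  have hJX : Set.range φ ⊆ Xset v := by
    rintro _ ⟨z, rfl⟩
    exact (h (Set.inclusion hsub z)).2
  set p : ↥(Iset (n:ℕ) (u n)) := ⟨_, mem_Iset_left (n:ℕ) (u n)⟩ with hp
  set r : ↥(Iset (n:ℕ) (u n)) := ⟨_, mem_Iset_right (n:ℕ) (u n)⟩ with hr
  have hpr : φ p ≠ φ r := by
    intro e
    have e3 : p = r := Set.inclusion_injective hsub (h.injective (Subtype.ext e))
    have e4 : (1:ℝ)/2^(n:ℕ) = 1/2^(n:ℕ) + 1/2^((n:ℕ)+u n) := congrArg Subtype.val e3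
    have hpos : (0:ℝ) < 1/2^((n:ℕ)+u n) := by positivity
    linarith
  obtain ⟨w, hwJ, hw0⟩ : ∃ w ∈ Set.range φ, w ≠ 0 := by
    rcases eq_or_ne (φ p) 0 with h0 | h0
    · exact ⟨φ r, ⟨r, rfl⟩, fun e => hpr (by rw [h0, e])⟩
    · exact ⟨φ p, ⟨p, rfl⟩, h0⟩
  rcases mem_Xset_iff.mp (hJX hwJ) with rfl | ⟨m, hm⟩
  · exact absurd rfl hw0
  refine ⟨m, ?_⟩
  have key := ordConn_sub_Iset hv hJconn.ordConnected hJX hwJ hm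
  intro x hx
  have hx' : Set.inclusion hsub ⟨(x:ℝ), hx⟩ = x := Subtype.ext rfl
  have : (h x : ℝ) ∈ Set.range φ :=
    ⟨⟨(x:ℝ), hx⟩, congrArg (fun t => ((h t : ℝ))) hx'⟩
  exact key _ this

end MX1aux

namespace MX1aux

open Set

lemma zpow_of_div_le {a b : ℕ} {C : ℝ} (h : (1:ℝ)/2^a ≤ C * (1/2^b)) :
    (2:ℝ)^((b:ℤ) - (a:ℤ)) ≤ C := by
  have h2a : (0:ℝ) < 2^a := two_pow_pos a
  have h2b : (0:ℝ) < 2^b := two_pow_pos b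
  rw [zpow_sub₀ (by norm_num : (2:ℝ) ≠ 0), zpow_natCast, zpow_natCast,
    div_le_iff₀ h2a]
  have h3 := mul_le_mul_of_nonneg_right h (le_of_lt (mul_pos h2a h2b))
  have e1 : (1:ℝ)/2^a * (2^a * 2^b) = 2^b := by field_simp
  have e2 : C * (1/2^b) * (2^a * 2^b) = C * 2^a := by field_simp
  rw [e1, e2] at h3
  exact h3

lemma lm_ge_two {L M : ℝ} {e f : ℤ} (hL : (2:ℝ)^e ≤ L) (hM : (2:ℝ)^(-f) ≤ M)
    (hef : f < e) : (2:ℝ) ≤ L * M := by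
  have h1 : (0:ℝ) < 2^e := zpow_pos (by norm_num) _
  have h2 : (0:ℝ) < 2^(-f : ℤ) := zpow_pos (by norm_num) _
  have h3 : (2:ℝ)^e * 2^(-f:ℤ) ≤ L * M :=
    mul_le_mul hL hM h2.le (le_trans h1.le hL)
  have h4 : (2:ℝ)^e * 2^(-f:ℤ) = 2^(e - f) := by
    rw [← zpow_add₀ (by norm_num : (2:ℝ) ≠ 0)]
    ring_nf
  have h5 : (2:ℝ)^(1:ℤ) ≤ 2^(e - f) := zpow_le_zpow_right₀ one_le_two (by omega)
  have h6 : (2:ℝ)^(1:ℤ) = 2 := by norm_num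
  linarith [h4 ▸ h3]

lemma key_eq {u v : ℕ+ → ℕ} (hu : ∀ n, 1 ≤ u n) (hv : ∀ n, 1 ≤ v n)
    (h : ↥(Xset u) ≃ ↥(Xset v))
    (hc : Continuous (h : ↥(Xset u) → ↥(Xset v)))
    (hc' : Continuous (h.symm : ↥(Xset v) → ↥(Xset u)))
    {L M : ℝ}
    (hL : ∀ x y : ↥(Xset u), dist (h x) (h y) ≤ L * dist x y)
    (hM : ∀ x y : ↥(Xset v), dist (h.symm x) (h.symm y) ≤ M * dist x y)
    (hLM : L * M < 2) : ∀ n, u n = v n := by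
  choose σ hσ using fun n => exists_target hu hv h hc n
  choose τ hτ using fun m => exists_target hv hu h.symm hc' m
  -- endpoints as subtype elements
  let P : (n : ℕ+) → ↥(Xset u) :=
    fun n => ⟨(1:ℝ)/2^(n:ℕ), Iset_sub_Xset u n (mem_Iset_left _ _)⟩
  let R : (n : ℕ+) → ↥(Xset u) :=
    fun n => ⟨(1:ℝ)/2^(n:ℕ) + 1/2^((n:ℕ) + u n),
      Iset_sub_Xset u n (mem_Iset_right _ _)⟩
  let P' : (m : ℕ+) → ↥(Xset v) :=
    fun m => ⟨(1:ℝ)/2^(m:ℕ), Iset_sub_Xset v m (mem_Iset_left _ _)⟩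
  let R' : (m : ℕ+) → ↥(Xset v) :=
    fun m => ⟨(1:ℝ)/2^(m:ℕ) + 1/2^((m:ℕ) + v m),
      Iset_sub_Xset v m (mem_Iset_right _ _)⟩
  have hτσ : ∀ n, τ (σ n) = n := by
    intro n
    have h1 := hσ n (P n) (mem_Iset_left _ _)
    have h2 := hτ (σ n) (h (P n)) h1
    rw [Equiv.symm_apply_apply] at h2
    by_contra hne
    exact Iset_disjoint (hu n) (hu (τ (σ n)))
      (fun e => hne (PNat.coe_injective e).symm) (mem_Iset_left _ _) h2
  have hστ : ∀ m, σ (τ m) = m := by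
    intro m
    have h1 := hτ m (P' m) (mem_Iset_left _ _)
    have h2 := hσ (τ m) (h.symm (P' m)) h1
    rw [Equiv.apply_symm_apply] at h2
    by_contra hne
    exact Iset_disjoint (hv m) (hv (σ (τ m)))
      (fun e => hne (PNat.coe_injective e).symm) (mem_Iset_left _ _) h2
  -- h maps 0 to 0
  have hzero' : h.symm ⟨0, zero_mem_Xset v⟩ = ⟨0, zero_mem_Xset u⟩ := by
    rcases mem_Xset_iff.mp (h.symm ⟨0, zero_mem_Xset v⟩).2 with h0 | ⟨k, hk⟩
    · exact Subtype.ext h0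
    · exfalso
      have h1 := hσ k _ hk
      rw [Equiv.apply_symm_apply] at h1
      exact absurd (Iset_pos h1) (by norm_num)
  have hzero : h ⟨0, zero_mem_Xset u⟩ = ⟨0, zero_mem_Xset v⟩ := by
    rw [← hzero', Equiv.apply_symm_apply]
  have hdist : ∀ x y : ↥(Xset u), dist x y = |(x:ℝ) - (y:ℝ)| := fun x y => by
    rw [Subtype.dist_eq, Real.dist_eq]
  have hdist' : ∀ x y : ↥(Xset v), dist x y = |(x:ℝ) - (y:ℝ)| := fun x y => by
    rw [Subtype.dist_eq, Real.dist_eq]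
  -- position bounds
  have ha : ∀ n : ℕ+, (1:ℝ)/2^((σ n : ℕ)) ≤ L * (1/2^(n:ℕ)) := by
    intro n
    have h1 := hσ n (P n) (mem_Iset_left _ _)
    have h2 := hL (P n) ⟨0, zero_mem_Xset u⟩
    rw [hzero, hdist, hdist'] at h2
    have h3 : |((h (P n) : ℝ)) - 0| = (h (P n) : ℝ) :=
      by rw [sub_zero, abs_of_pos (Iset_pos h1)]
    have h4 : |((P n : ℝ)) - 0| = (1:ℝ)/2^(n:ℕ) := by
      rw [sub_zero]; exact abs_of_pos (by positivity)
    rw [h3, h4] at h2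
    exact le_trans h1.1 h2
  have hb : ∀ m : ℕ+, (1:ℝ)/2^((τ m : ℕ)) ≤ M * (1/2^(m:ℕ)) := by
    intro m
    have h1 := hτ m (P' m) (mem_Iset_left _ _)
    have h2 := hM (P' m) ⟨0, zero_mem_Xset v⟩
    rw [hzero', hdist, hdist'] at h2
    have h3 : |((h.symm (P' m) : ℝ)) - 0| = (h.symm (P' m) : ℝ) :=
      by rw [sub_zero, abs_of_pos (Iset_pos h1)]
    have h4 : |((P' m : ℝ)) - 0| = (1:ℝ)/2^(m:ℕ) := by
      rw [sub_zero]; exact abs_of_pos (by positivity)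
    rw [h3, h4] at h2
    exact le_trans h1.1 h2
  -- length bounds
  have hcn : ∀ n : ℕ+,
      (1:ℝ)/2^((n:ℕ) + u n) ≤ M * (1/2^(((σ n):ℕ) + v (σ n))) := by
    intro n
    have hp := hσ n (P n) (mem_Iset_left _ _)
    have hr := hσ n (R n) (mem_Iset_right _ _)
    have h2 := hM (h (P n)) (h (R n))
    rw [Equiv.symm_apply_apply, Equiv.symm_apply_apply, hdist, hdist'] at h2
    have h3 : |((P n : ℝ)) - (R n : ℝ)| = (1:ℝ)/2^((n:ℕ) + u n) := by
      have : ((P n : ℝ)) - (R n : ℝ) = -(1/2^((n:ℕ) + u n)) := by simp only [P, R]; ring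
      rw [this, abs_neg, abs_of_pos (by positivity)]
    rw [h3] at h2
    have h4 : |((h (P n) : ℝ)) - (h (R n) : ℝ)| ≤ 1/2^(((σ n):ℕ) + v (σ n)) :=
      abs_sub_le_of_mem_Iset hp hr
    have hM0 : 0 ≤ M := by
      by_contra hM0
      push_neg at hM0
      have : (0:ℝ) < 1/2^((n:ℕ) + u n) := by positivity
      nlinarith [abs_nonneg (((h (P n) : ℝ)) - (h (R n) : ℝ))]
    calc (1:ℝ)/2^((n:ℕ) + u n) ≤ M * |((h (P n) : ℝ)) - (h (R n) : ℝ)| := h2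
      _ ≤ M * (1/2^(((σ n):ℕ) + v (σ n))) := mul_le_mul_of_nonneg_left h4 hM0
  have hdn : ∀ n : ℕ+,
      (1:ℝ)/2^(((σ n):ℕ) + v (σ n)) ≤ L * (1/2^((n:ℕ) + u n)) := by
    intro n
    have hp := hτ (σ n) (P' (σ n)) (mem_Iset_left _ _)
    have hr := hτ (σ n) (R' (σ n)) (mem_Iset_right _ _)
    rw [hτσ n] at hp hr
    have h2 := hL (h.symm (P' (σ n))) (h.symm (R' (σ n)))
    rw [Equiv.apply_symm_apply, Equiv.apply_symm_apply, hdist, hdist'] at h2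
    have h3 : |((P' (σ n) : ℝ)) - (R' (σ n) : ℝ)| =
        (1:ℝ)/2^(((σ n):ℕ) + v (σ n)) := by
      have : ((P' (σ n) : ℝ)) - (R' (σ n) : ℝ) =
          -(1/2^(((σ n):ℕ) + v (σ n))) := by simp only [P', R']; ring
      rw [this, abs_neg, abs_of_pos (by positivity)]
    rw [h3] at h2
    have h4 : |((h.symm (P' (σ n)) : ℝ)) - (h.symm (R' (σ n)) : ℝ)|
        ≤ 1/2^((n:ℕ) + u n) := abs_sub_le_of_mem_Iset hp hr
    have hL0 : 0 ≤ L := by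
      by_contra hL0
      push_neg at hL0
      have : (0:ℝ) < 1/2^(((σ n):ℕ) + v (σ n)) := by positivity
      nlinarith [abs_nonneg (((h.symm (P' (σ n)) : ℝ)) - (h.symm (R' (σ n)) : ℝ))]
    calc (1:ℝ)/2^(((σ n):ℕ) + v (σ n))
        ≤ L * |((h.symm (P' (σ n)) : ℝ)) - (h.symm (R' (σ n)) : ℝ)| := h2
      _ ≤ L * (1/2^((n:ℕ) + u n)) := mul_le_mul_of_nonneg_left h4 hL0
  -- zpow form
  have haz : ∀ n : ℕ+, (2:ℝ)^(((n:ℕ):ℤ) - ((σ n:ℕ):ℤ)) ≤ L :=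
    fun n => zpow_of_div_le (ha n)
  have hbz : ∀ n : ℕ+, (2:ℝ)^(-(((n:ℕ):ℤ) - ((σ n:ℕ):ℤ))) ≤ M := by
    intro n
    have h1 := hb (σ n)
    rw [hτσ n] at h1
    have := zpow_of_div_le h1
    simpa [neg_sub] using this
  -- the shift is constant
  have hconst : ∀ n : ℕ+, ((n:ℕ):ℤ) - ((σ n:ℕ):ℤ) = ((1:ℕ):ℤ) - ((σ 1:ℕ):ℤ) := by
    intro n
    by_contra hne
    rcases lt_or_gt_of_ne hne with hlt | hlt
    · exact absurd (lm_ge_two (haz 1) (hbz n) hlt) (not_le.mpr hLM)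
    · exact absurd (lm_ge_two (haz n) (hbz 1) hlt) (not_le.mpr hLM)
  -- σ is the identity
  have hσid : ∀ n, σ n = n := by
    have h1 := hconst (τ 1)
    rw [hστ 1] at h1
    have hone : (((1:ℕ+):ℕ):ℤ) = 1 := rfl
    rw [hone] at h1
    -- h1 : (τ 1 : ℤ) - 1 = 1 - σ 1
    have h2 : ((τ 1 : ℕ):ℤ) + ((σ 1 : ℕ):ℤ) = 2 := by omega
    have h3 : (1:ℤ) ≤ ((τ 1 : ℕ):ℤ) := by exact_mod_cast (τ 1).one_le
    have h4 : (1:ℤ) ≤ ((σ 1 : ℕ):ℤ) := by exact_mod_cast (σ 1).one_le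
    have h5 : ((σ 1 : ℕ):ℤ) = 1 := by omega
    intro n
    have h6 := hconst n
    rw [h5] at h6
    have : ((σ n : ℕ):ℤ) = ((n:ℕ):ℤ) := by omega
    exact PNat.coe_injective (by exact_mod_cast this)
  -- L, M ≥ 1
  have hL1 : (1:ℝ) ≤ L := by
    have := haz 1
    rw [hσid 1] at this
    simpa using this
  have hM1 : (1:ℝ) ≤ M := by
    have := hbz 1
    rw [hσid 1] at this
    simpa using this
  -- conclude u n = v n
  intro n
  have hc1 := hcn n
  have hd1 := hdn n
  rw [hσid n] at hc1 hd1
  have hdz : (2:ℝ)^((((n:ℕ) + u n:ℕ):ℤ) - (((n:ℕ) + v n:ℕ):ℤ)) ≤ L :=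
    zpow_of_div_le hd1
  have hcz : (2:ℝ)^((((n:ℕ) + v n:ℕ):ℤ) - (((n:ℕ) + u n:ℕ):ℤ)) ≤ M :=
    zpow_of_div_le hc1
  have he : (((n:ℕ) + u n:ℕ):ℤ) - (((n:ℕ) + v n:ℕ):ℤ) = (u n:ℤ) - (v n:ℤ) := by
    push_cast; ring
  rw [he] at hdz
  rw [show (((n:ℕ) + v n:ℕ):ℤ) - (((n:ℕ) + u n:ℕ):ℤ) = -((u n:ℤ) - (v n:ℤ)) by
    push_cast; ring] at hcz
  by_contra hne
  have hne' : (u n:ℤ) ≠ (v n:ℤ) := fun e => hne (by exact_mod_cast e)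
  rcases lt_or_gt_of_ne hne' with hlt | hlt
  · -- u n < v n : M ≥ 2^(v n - u n) ≥ 2, L ≥ 1
    have h7 : (2:ℝ)^(-((u n:ℤ) - (v n:ℤ))) ≤ M := hcz
    have h8 : (2:ℝ)^((0:ℤ)) ≤ L := by simpa using hL1
    have := lm_ge_two h8 h7 (by omega : (u n:ℤ) - (v n:ℤ) < 0)
    exact absurd this (not_le.mpr hLM)
  · have h8 : (2:ℝ)^(-(0:ℤ)) ≤ M := by simpa using hM1
    have := lm_ge_two hdz h8 (by omega : (0:ℤ) < (u n:ℤ) - (v n:ℤ))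
    exact absurd this (not_le.mpr hLM)

end MX1aux

namespace MX1aux

open Set Classical in
/-- `u` sequence attached to a set `S`. -/
noncomputable def uS (S : Set ℕ+) : ℕ+ → ℕ := fun n => if n ∈ S then 2 else 1

open Classical in
/-- forward map `X₁ → X_{u_S}`. -/
noncomputable def Fm (S : Set ℕ+) (x : ℝ) : ℝ :=
  if h : ∃ n : ℕ+, x ∈ Iset (n:ℕ) 1 ∧ n ∈ S then (x + 1/2^((h.choose : ℕ)))/2
  else x

open Classical in
/-- inverse map. -/
noncomputable def Gm (S : Set ℕ+) (y : ℝ) : ℝ :=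
  if h : ∃ n : ℕ+, y ∈ Iset (n:ℕ) 2 ∧ n ∈ S then 2*y - 1/2^((h.choose : ℕ))
  else y

lemma uS_one_le (S : Set ℕ+) (n : ℕ+) : 1 ≤ uS S n := by
  unfold uS; split <;> norm_num

lemma Fm_eq_of {S : Set ℕ+} {n : ℕ+} {x : ℝ} (hx : x ∈ Iset (n:ℕ) 1)
    (hn : n ∈ S) : Fm S x = (x + 1/2^(n:ℕ))/2 := by
  have hex : ∃ m : ℕ+, x ∈ Iset (m:ℕ) 1 ∧ m ∈ S := ⟨n, hx, hn⟩
  rw [Fm, dif_pos hex]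
  have : hex.choose = n := by
    by_contra hne
    exact Iset_disjoint le_rfl le_rfl
      (fun e => hne (PNat.coe_injective e)) hex.choose_spec.1 hx
  rw [this]

lemma Fm_eq_id {S : Set ℕ+} {n : ℕ+} {x : ℝ} (hx : x ∈ Iset (n:ℕ) 1)
    (hn : n ∉ S) : Fm S x = x := by
  rw [Fm, dif_neg]
  rintro ⟨m, hxm, hmS⟩
  rcases eq_or_ne m n with rfl | hne
  · exact hn hmS
  · exact Iset_disjoint le_rfl le_rfl
      (fun e => hne (PNat.coe_injective e)) hxm hx

lemma Fm_zero (S : Set ℕ+) : Fm S 0 = 0 := by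
  rw [Fm, dif_neg]
  rintro ⟨m, hxm, -⟩
  exact absurd (Iset_pos hxm) (by norm_num)

lemma Gm_eq_of {S : Set ℕ+} {n : ℕ+} {y : ℝ} (hy : y ∈ Iset (n:ℕ) 2)
    (hn : n ∈ S) : Gm S y = 2*y - 1/2^(n:ℕ) := by
  have hex : ∃ m : ℕ+, y ∈ Iset (m:ℕ) 2 ∧ m ∈ S := ⟨n, hy, hn⟩
  rw [Gm, dif_pos hex]
  have : hex.choose = n := by
    by_contra hne
    exact Iset_disjoint (by norm_num) (by norm_num)
      (fun e => hne (PNat.coe_injective e)) hex.choose_spec.1 hy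
  rw [this]

lemma Gm_eq_id {S : Set ℕ+} {n : ℕ+} {y : ℝ} (hy : y ∈ Iset (n:ℕ) 1)
    (hn : n ∉ S) : Gm S y = y := by
  rw [Gm, dif_neg]
  rintro ⟨m, hym, hmS⟩
  rcases eq_or_ne m n with rfl | hne
  · exact hn hmS
  · exact Iset_disjoint (by norm_num) le_rfl
      (fun e => hne (PNat.coe_injective e)) hym hy

lemma Gm_zero (S : Set ℕ+) : Gm S 0 = 0 := by
  rw [Gm, dif_neg]
  rintro ⟨m, hxm, -⟩
  exact absurd (Iset_pos hxm) (by norm_num)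

lemma Iset_len_eq (n : ℕ) (m : ℕ) : (1:ℝ)/2^(n+m) = (1/2^n) * (1/2^m) := by
  rw [pow_add]; field_simp

lemma Fm_mem {S : Set ℕ+} {n : ℕ+} {x : ℝ} (hx : x ∈ Iset (n:ℕ) 1) :
    Fm S x ∈ Iset (n:ℕ) (uS S n) ∧ Gm S (Fm S x) = x := by
  obtain ⟨h1, h2⟩ := hx
  have e1 : (1:ℝ)/2^((n:ℕ)+1) = (1/2^(n:ℕ)) * (1/2) := by
    rw [Iset_len_eq]; norm_num
  by_cases hn : n ∈ S
  · have hF := Fm_eq_of ⟨h1, h2⟩ hn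
    have huS : uS S n = 2 := if_pos hn
    have e2 : (1:ℝ)/2^((n:ℕ)+2) = (1/2^(n:ℕ)) * (1/4) := by
      rw [Iset_len_eq]; norm_num
    have hmem : Fm S x ∈ Iset (n:ℕ) 2 := by
      rw [hF]
      constructor
      · linarith
      · rw [e2]; rw [e1] at h2; linarith
    refine ⟨by rw [huS]; exact hmem, ?_⟩
    rw [Gm_eq_of hmem hn, hF]
    ring
  · have hF := Fm_eq_id ⟨h1, h2⟩ hn
    have huS : uS S n = 1 := if_neg hn
    refine ⟨by rw [huS, hF]; exact ⟨h1, h2⟩, ?_⟩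
    rw [hF, Gm_eq_id ⟨h1, h2⟩ hn]

lemma Gm_mem {S : Set ℕ+} {n : ℕ+} {y : ℝ} (hy : y ∈ Iset (n:ℕ) (uS S n)) :
    Gm S y ∈ Iset (n:ℕ) 1 ∧ Fm S (Gm S y) = y := by
  have e1 : (1:ℝ)/2^((n:ℕ)+1) = (1/2^(n:ℕ)) * (1/2) := by
    rw [Iset_len_eq]; norm_num
  have e2 : (1:ℝ)/2^((n:ℕ)+2) = (1/2^(n:ℕ)) * (1/4) := by
    rw [Iset_len_eq]; norm_num
  by_cases hn : n ∈ S
  · have huS : uS S n = 2 := if_pos hn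
    rw [huS] at hy
    obtain ⟨h1, h2⟩ := hy
    have hG := Gm_eq_of ⟨h1, h2⟩ hn
    have hmem : Gm S y ∈ Iset (n:ℕ) 1 := by
      rw [hG]
      constructor
      · linarith
      · rw [e1]; rw [e2] at h2; linarith
    refine ⟨hmem, ?_⟩
    rw [Fm_eq_of hmem hn, hG]
    ring
  · have huS : uS S n = 1 := if_neg hn
    rw [huS] at hy
    have hG := Gm_eq_id hy hn
    refine ⟨by rw [hG]; exact hy, ?_⟩
    rw [hG, Fm_eq_id hy hn]

lemma Fm_defect {S : Set ℕ+} {n : ℕ+} {x : ℝ} (hx : x ∈ Iset (n:ℕ) 1) :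
    0 ≤ x - Fm S x ∧ x - Fm S x ≤ (x - 1/2^(n:ℕ))/2 := by
  by_cases hn : n ∈ S
  · rw [Fm_eq_of hx hn]
    constructor <;> [linarith [hx.1]; linarith]
  · rw [Fm_eq_id hx hn]
    constructor <;> [linarith; linarith [hx.1]]

lemma Fm_lip {S : Set ℕ+} :
    ∀ x ∈ Xset (fun _ => 1), ∀ y ∈ Xset (fun _ => 1), x ≤ y →
      (y - x)/2 ≤ Fm S y - Fm S x ∧ Fm S y - Fm S x ≤ (3/2) * (y - x) := by
  intro x hx y hy hxy
  rcases mem_Xset_iff.mp hx with rfl | ⟨n, hn⟩ <;>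
    rcases mem_Xset_iff.mp hy with rfl | ⟨m, hm⟩
  · rw [Fm_zero]; constructor <;> linarith
  · -- x = 0
    rw [Fm_zero]
    have hd := Fm_defect (S := S) hm
    have h1 : (0:ℝ) < 1/2^(m:ℕ) := by positivity
    constructor <;> [linarith [hm.1]; linarith [hm.1]]
  · -- y = 0, x in interval: impossible
    exact absurd (lt_of_lt_of_le (Iset_pos hn) hxy) (by norm_num)
  · rcases eq_or_ne n m with rfl | hnm
    · -- same interval
      by_cases hS : n ∈ S
      · rw [Fm_eq_of hn hS, Fm_eq_of hm hS]
        constructor <;> linarith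
      · rw [Fm_eq_id hn hS, Fm_eq_id hm hS]
        constructor <;> linarith
    · -- different intervals: m < n
      have hb1 := Iset_sub le_rfl hn
      have hb2 := Iset_sub le_rfl hm
      have hne' : (n:ℕ) ≠ (m:ℕ) := fun e => hnm (PNat.coe_injective e)
      have hmn : (m:ℕ) < (n:ℕ) := by
        by_contra hle
        push_neg at hle
        have hlt : (n:ℕ) < (m:ℕ) := by omega
        have h3 : (1:ℝ)/2^(m:ℕ) ≤ 1/2^((n:ℕ)+1) := half_le_half (by omega)
        have e : (1:ℝ)/2^((n:ℕ)+1) = (1/2)*(1/2^(n:ℕ)) := by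
          rw [pow_succ]; ring
        have hp : (0:ℝ) < 1/2^(n:ℕ) := by positivity
        nlinarith [hb2.2, hb1.1]
      have h2m : (1:ℝ)/2^(n:ℕ) ≤ 1/2^((m:ℕ)+1) := half_le_half (by omega)
      have em : (1:ℝ)/2^((m:ℕ)+1) = (1/2)*(1/2^(m:ℕ)) := by
        rw [pow_succ]; ring
      have hgap : (1/2)*(1/2^(n:ℕ)) ≤ y - x := by
        nlinarith [hb2.1, hb1.2]
      have hdx := Fm_defect (S := S) hn
      have hdy := Fm_defect (S := S) hm
      have hxb : x ≤ 1/2^(m:ℕ) := by nlinarith [hb1.2]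
      have hdx2 : x - Fm S x ≤ (y - x)/2 := by nlinarith [hb1.2, hdx.2]
      have hdy2 : y - Fm S y ≤ (y - x)/2 := by nlinarith [hdy.2]
      constructor <;> linarith [hdx.1, hdy.1]

end MX1aux

namespace MX1aux

open Set

/-- The bi-Lipschitz equivalence `X₁ ≃ X_{u_S}`. -/
noncomputable def eS (S : Set ℕ+) : ↥(Xset (fun _ => 1)) ≃ ↥(Xset (uS S)) where
  toFun x := ⟨Fm S x, by
    rcases mem_Xset_iff.mp x.2 with h0 | ⟨n, hn⟩
    · rw [h0, Fm_zero]; exact zero_mem_Xset _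
    · exact Iset_sub_Xset _ n (Fm_mem hn).1⟩
  invFun y := ⟨Gm S y, by
    rcases mem_Xset_iff.mp y.2 with h0 | ⟨n, hn⟩
    · rw [h0, Gm_zero]; exact zero_mem_Xset _
    · exact Iset_sub_Xset _ n (Gm_mem hn).1⟩
  left_inv x := by
    apply Subtype.ext
    rcases mem_Xset_iff.mp x.2 with h0 | ⟨n, hn⟩
    · simp only [h0, Fm_zero, Gm_zero]
    · exact (Fm_mem hn).2
  right_inv y := by
    apply Subtype.ext
    rcases mem_Xset_iff.mp y.2 with h0 | ⟨n, hn⟩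
    · simp only [h0, Gm_zero, Fm_zero]
    · exact (Gm_mem hn).2

lemma eS_dist_le (S : Set ℕ+) (x y : ↥(Xset (fun _ => 1))) :
    dist (eS S x) (eS S y) ≤ (3/2) * dist x y := by
  rw [Subtype.dist_eq, Subtype.dist_eq, Real.dist_eq, Real.dist_eq]
  have hxy : ((eS S x : ℝ)) = Fm S x ∧ ((eS S y : ℝ)) = Fm S y := ⟨rfl, rfl⟩
  rw [hxy.1, hxy.2]
  rcases le_total (x:ℝ) (y:ℝ) with hle | hle
  · have := Fm_lip (S := S) x x.2 y y.2 hle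
    rw [abs_sub_comm, abs_of_nonneg (by linarith [this.1] : (0:ℝ) ≤ Fm S y - Fm S x),
      abs_sub_comm ((x:ℝ)) _, abs_of_nonneg (by linarith : (0:ℝ) ≤ (y:ℝ) - (x:ℝ))]
    linarith [this.2]
  · have := Fm_lip (S := S) y y.2 x x.2 hle
    rw [abs_of_nonneg (by linarith [this.1] : (0:ℝ) ≤ Fm S x - Fm S y),
      abs_of_nonneg (by linarith : (0:ℝ) ≤ (x:ℝ) - (y:ℝ))]
    linarith [this.2]

lemma eS_dist_ge (S : Set ℕ+) (x y : ↥(Xset (fun _ => 1))) :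
    dist x y ≤ 2 * dist (eS S x) (eS S y) := by
  rw [Subtype.dist_eq, Subtype.dist_eq, Real.dist_eq, Real.dist_eq]
  have hxy : ((eS S x : ℝ)) = Fm S x ∧ ((eS S y : ℝ)) = Fm S y := ⟨rfl, rfl⟩
  rw [hxy.1, hxy.2]
  rcases le_total (x:ℝ) (y:ℝ) with hle | hle
  · have := Fm_lip (S := S) x x.2 y y.2 hle
    rw [abs_sub_comm ((x:ℝ)) ((y:ℝ)), abs_sub_comm (Fm S ((x:ℝ))) (Fm S ((y:ℝ))),
      abs_of_nonneg (by linarith [this.1] : (0:ℝ) ≤ Fm S ((y:ℝ)) - Fm S ((x:ℝ))),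
      abs_of_nonneg (by linarith : (0:ℝ) ≤ (y:ℝ) - (x:ℝ))]
    linarith [this.1]
  · have := Fm_lip (S := S) y y.2 x x.2 hle
    rw [abs_of_nonneg (by linarith [this.1] : (0:ℝ) ≤ Fm S ((x:ℝ)) - Fm S ((y:ℝ))),
      abs_of_nonneg (by linarith : (0:ℝ) ≤ (x:ℝ) - (y:ℝ))]
    linarith [this.1]

lemma eS_biLip (S : Set ℕ+) : IsBiLipschitzEquiv (eS S) := by
  constructor
  · refine ⟨3/2, LipschitzWith.of_dist_le_mul fun x y => ?_⟩
    have : ((3/2 : NNReal) : ℝ) = 3/2 := by norm_num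
    rw [this]
    exact eS_dist_le S x y
  · refine ⟨2, LipschitzWith.of_dist_le_mul fun p q => ?_⟩
    have e2 : ((2 : NNReal) : ℝ) = 2 := by norm_num
    rw [e2]
    have := eS_dist_ge S ((eS S).symm p) ((eS S).symm q)
    rwa [Equiv.apply_symm_apply, Equiv.apply_symm_apply] at this

end MX1aux

namespace MX1aux

lemma dil_spec {X Y : Type*} [MetricSpace X] [MetricSpace Y] {f : X → Y}
    (hf : ∃ K : NNReal, LipschitzWith K f) (hX : ∃ x y : X, x ≠ y) :
    ∀ x y, dist (f x) (f y) ≤ dil f * dist x y := by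
  have hne : Set.Nonempty {K : ℝ | ∀ x y : X, dist (f x) (f y) ≤ K * dist x y} :=
    ⟨hf.choose, fun x y => hf.choose_spec.dist_le_mul x y⟩
  have hbdd : BddBelow {K : ℝ | ∀ x y : X, dist (f x) (f y) ≤ K * dist x y} := by
    obtain ⟨x, y, hxy⟩ := hX
    refine ⟨0, fun K hK => ?_⟩
    have h1 := hK x y
    have h2 : 0 < dist x y := dist_pos.mpr hxy
    nlinarith [dist_nonneg (x := f x) (y := f y)]
  have hcl : IsClosed {K : ℝ | ∀ x y : X, dist (f x) (f y) ≤ K * dist x y} := by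
    have : {K : ℝ | ∀ x y : X, dist (f x) (f y) ≤ K * dist x y} =
        ⋂ (x : X) (y : X), {K : ℝ | dist (f x) (f y) ≤ K * dist x y} := by
      ext K; simp [Set.mem_iInter]
    rw [this]
    exact isClosed_iInter fun x => isClosed_iInter fun y =>
      isClosed_le continuous_const (continuous_id.mul continuous_const)
  exact hcl.csInf_mem hne hbdd

lemma dil_pos {X Y : Type*} [MetricSpace X] [MetricSpace Y] {f : X → Y}
    (hf : ∃ K : NNReal, LipschitzWith K f) (hinj : Function.Injective f)
    (hX : ∃ x y : X, x ≠ y) : 0 < dil f := by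
  obtain ⟨x, y, hxy⟩ := hX
  have h1 := dil_spec hf ⟨x, y, hxy⟩ x y
  have h2 : 0 < dist (f x) (f y) := dist_pos.mpr (fun e => hxy (hinj e))
  have h3 : 0 < dist x y := dist_pos.mpr hxy
  nlinarith

lemma dil_mul_symm_le_exp {X Y : Type*} [MetricSpace X] [MetricSpace Y]
    (f : X ≃ Y) (hbi : IsBiLipschitzEquiv f) (hX : ∃ x y : X, x ≠ y) :
    dil (f : X → Y) * dil (f.symm : Y → X) ≤ Real.exp (lipCost f) := by
  obtain ⟨x, y, hxy⟩ := hX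
  have hY : ∃ p q : Y, p ≠ q := ⟨f x, f y, f.injective.ne hxy⟩
  have h1 : 0 < dil (f : X → Y) := dil_pos hbi.1 f.injective ⟨x, y, hxy⟩
  have h2 : 0 < dil (f.symm : Y → X) := dil_pos hbi.2 f.symm.injective hY
  rw [lipCost, Real.exp_add]
  have e1 : dil (f : X → Y) = Real.exp (Real.log (dil (f : X → Y))) :=
    (Real.exp_log h1).symm
  have e2 : dil (f.symm : Y → X) = Real.exp (Real.log (dil (f.symm : Y → X))) :=
    (Real.exp_log h2).symm
  calc dil (f : X → Y) * dil (f.symm : Y → X)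
      = Real.exp (Real.log (dil (f : X → Y))) *
        Real.exp (Real.log (dil (f.symm : Y → X))) := by rw [← e1, ← e2]
    _ ≤ _ := mul_le_mul (Real.exp_le_exp.mpr (le_abs_self _))
        (Real.exp_le_exp.mpr (le_abs_self _)) (Real.exp_pos _).le
        (Real.exp_pos _).le

end MX1aux

namespace MX1aux

noncomputable def Ycpt (S : Set ℕ+) : CptMet :=
  @CptMet.mk ↥(Xset (uS S)) _ (compactSpace_Xset _ (uS_one_le S))

lemma twoX (u : ℕ+ → ℕ) : ∃ x y : ↥(Xset u), x ≠ y := by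
  refine ⟨⟨0, zero_mem_Xset u⟩,
    ⟨(1:ℝ)/2^((1:ℕ+):ℕ), Iset_sub_Xset u 1 (mem_Iset_left _ _)⟩, ?_⟩
  intro e
  have h := congrArg Subtype.val e
  norm_num at h

end MX1aux


/-- The space of isometry classes of compact metric spaces at finite Lipschitz distance
from `X_𝟏` is not separable: no countable family in it is `d_L`-dense. -/
theorem MX1_not_separable :
    ¬ ∃ D : ℕ → CptMet,
      (∀ n, lipDist ↥(Xset (fun _ => 1)) (D n).carrier ≠ ⊤) ∧
      (∀ Y : CptMet, lipDist ↥(Xset (fun _ => 1)) Y.carrier ≠ ⊤ →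
        ∀ ε : ℝ≥0∞, 0 < ε → ∃ n, lipDist Y.carrier (D n).carrier < ε) := by
  classical
  rintro ⟨D, -, hdense⟩
  set ε : ℝ≥0∞ := ENNReal.ofReal (Real.log 2 / 2) with hεdef
  have hlog2 : (0:ℝ) < Real.log 2 / 2 := div_pos (Real.log_pos one_lt_two) two_pos
  have hε : 0 < ε := ENNReal.ofReal_pos.mpr hlog2
  have hYfin : ∀ S : Set ℕ+,
      lipDist ↥(Xset (fun _ => 1)) (MX1aux.Ycpt S).carrier ≠ ⊤ := by
    intro S
    have hle : lipDist ↥(Xset (fun _ => 1)) (MX1aux.Ycpt S).carrier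
        ≤ ENNReal.ofReal (lipCost (MX1aux.eS S)) :=
      iInf₂_le (MX1aux.eS S) (MX1aux.eS_biLip S)
    exact ne_top_of_le_ne_top ENNReal.ofReal_ne_top hle
  choose Φ hΦ using fun S => hdense (MX1aux.Ycpt S) (hYfin S) ε hε
  obtain ⟨S, T, hST, hΦeq⟩ : ∃ S T : Set ℕ+, S ≠ T ∧ Φ S = Φ T := by
    by_contra hno
    push_neg at hno
    have hinj : Function.Injective
        (fun S : Set ℕ+ => (⟨Φ S + 1, Nat.succ_pos _⟩ : ℕ+)) := by
      intro S T h
      have h2 : Φ S + 1 = Φ T + 1 := congrArg PNat.val h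
      by_contra hne
      exact hno S T hne (by omega)
    exact Function.cantor_injective _ hinj
  obtain ⟨n, hnS, hnT⟩ : ∃ n, Φ S = n ∧ Φ T = n := ⟨Φ S, rfl, hΦeq.symm⟩
  have hΦS : lipDist (MX1aux.Ycpt S).carrier (D n).carrier < ε := by
    rw [← hnS]; exact hΦ S
  have hΦT : lipDist (MX1aux.Ycpt T).carrier (D n).carrier < ε := by
    rw [← hnT]; exact hΦ T
  -- extract bi-Lipschitz equivalences with small cost
  have extract : ∀ (U : Set ℕ+),
      lipDist (MX1aux.Ycpt U).carrier (D n).carrier < ε →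
      ∃ f : ↥(Xset (MX1aux.uS U)) ≃ (D n).carrier,
        IsBiLipschitzEquiv f ∧ lipCost f < Real.log 2 / 2 := by
    intro U hU
    have hU' : (⨅ (f : ↥(Xset (MX1aux.uS U)) ≃ (D n).carrier)
        (_ : IsBiLipschitzEquiv f), ENNReal.ofReal (lipCost f)) < ε := hU
    obtain ⟨f, hf⟩ := iInf_lt_iff.mp hU'
    obtain ⟨hfbi, hflt⟩ := iInf_lt_iff.mp hf
    exact ⟨f, hfbi, (ENNReal.ofReal_lt_ofReal_iff hlog2).mp hflt⟩
  obtain ⟨f, hfbi, hfc⟩ := extract S hΦS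
  obtain ⟨g, hgbi, hgc⟩ := extract T hΦT
  -- basic nontriviality
  have twoS := MX1aux.twoX (MX1aux.uS S)
  have twoT := MX1aux.twoX (MX1aux.uS T)
  have twoD : ∃ p q : (D n).carrier, p ≠ q := by
    obtain ⟨x, y, hxy⟩ := twoS
    exact ⟨f x, f y, f.injective.ne hxy⟩
  -- dilation facts
  have hdf := MX1aux.dil_spec hfbi.1 twoS
  have hdf' := MX1aux.dil_spec hfbi.2 twoD
  have hdg := MX1aux.dil_spec hgbi.1 twoT
  have hdg' := MX1aux.dil_spec hgbi.2 twoD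
  have pf := MX1aux.dil_pos hfbi.1 f.injective twoS
  have pf' := MX1aux.dil_pos hfbi.2 f.symm.injective twoD
  have pg := MX1aux.dil_pos hgbi.1 g.injective twoT
  have pg' := MX1aux.dil_pos hgbi.2 g.symm.injective twoD
  -- the composite equivalence
  set h : ↥(Xset (MX1aux.uS S)) ≃ ↥(Xset (MX1aux.uS T)) := f.trans g.symm with hhdef
  have hLpt : ∀ x y : ↥(Xset (MX1aux.uS S)),
      dist (h x) (h y) ≤ (dil (g.symm : (D n).carrier → _) * dil (f : _ → (D n).carrier)) * dist x y := by
    intro x y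
    calc dist (h x) (h y) = dist (g.symm (f x)) (g.symm (f y)) := rfl
      _ ≤ dil (g.symm : (D n).carrier → _) * dist (f x) (f y) := hdg' (f x) (f y)
      _ ≤ dil (g.symm : (D n).carrier → _) * (dil (f : _ → (D n).carrier) * dist x y) :=
          mul_le_mul_of_nonneg_left (hdf x y) pg'.le
      _ = _ := by ring
  have hMpt : ∀ p q : ↥(Xset (MX1aux.uS T)),
      dist (h.symm p) (h.symm q) ≤ (dil (f.symm : (D n).carrier → _) * dil (g : _ → (D n).carrier)) * dist p q := by
    intro p q
    calc dist (h.symm p) (h.symm q) = dist (f.symm (g p)) (f.symm (g q)) := rfl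
      _ ≤ dil (f.symm : (D n).carrier → _) * dist (g p) (g q) := hdf' (g p) (g q)
      _ ≤ dil (f.symm : (D n).carrier → _) * (dil (g : _ → (D n).carrier) * dist p q) :=
          mul_le_mul_of_nonneg_left (hdg p q) pf'.le
      _ = _ := by ring
  have hexp : (dil (g.symm : (D n).carrier → _) * dil (f : _ → (D n).carrier)) *
      (dil (f.symm : (D n).carrier → _) * dil (g : _ → (D n).carrier)) < 2 := by
    have h1 := MX1aux.dil_mul_symm_le_exp f hfbi twoS
    have h2 := MX1aux.dil_mul_symm_le_exp g hgbi twoT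
    have h3 : Real.exp (lipCost f) < Real.exp (Real.log 2 / 2) :=
      Real.exp_lt_exp.mpr hfc
    have h4 : Real.exp (lipCost g) < Real.exp (Real.log 2 / 2) :=
      Real.exp_lt_exp.mpr hgc
    have h5 : Real.exp (Real.log 2 / 2) * Real.exp (Real.log 2 / 2) = 2 := by
      rw [← Real.exp_add]
      have : Real.log 2 / 2 + Real.log 2 / 2 = Real.log 2 := by ring
      rw [this]
      exact Real.exp_log two_pos
    have hA : dil (f : _ → (D n).carrier) * dil (f.symm : (D n).carrier → _)
        < Real.exp (Real.log 2 / 2) := lt_of_le_of_lt h1 h3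
    have hB : dil (g : _ → (D n).carrier) * dil (g.symm : (D n).carrier → _)
        < Real.exp (Real.log 2 / 2) := lt_of_le_of_lt h2 h4
    have hAB : (dil (f : _ → (D n).carrier) * dil (f.symm : (D n).carrier → _)) *
        (dil (g : _ → (D n).carrier) * dil (g.symm : (D n).carrier → _)) < 2 := by
      calc (dil (f : _ → (D n).carrier) * dil (f.symm : (D n).carrier → _)) *
          (dil (g : _ → (D n).carrier) * dil (g.symm : (D n).carrier → _))
          < Real.exp (Real.log 2 / 2) * Real.exp (Real.log 2 / 2) :=
            mul_lt_mul'' hA hB (by positivity) (by positivity)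
        _ = 2 := h5
    calc (dil (g.symm : (D n).carrier → _) * dil (f : _ → (D n).carrier)) *
        (dil (f.symm : (D n).carrier → _) * dil (g : _ → (D n).carrier))
        = (dil (f : _ → (D n).carrier) * dil (f.symm : (D n).carrier → _)) *
          (dil (g : _ → (D n).carrier) * dil (g.symm : (D n).carrier → _)) := by ring
      _ < 2 := hAB
  have hch : Continuous (h : ↥(Xset (MX1aux.uS S)) → ↥(Xset (MX1aux.uS T))) :=
    (hgbi.2.choose_spec.continuous).comp (hfbi.1.choose_spec.continuous)
  have hch' : Continuous (h.symm : ↥(Xset (MX1aux.uS T)) → ↥(Xset (MX1aux.uS S))) :=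
    (hfbi.2.choose_spec.continuous).comp (hgbi.1.choose_spec.continuous)
  have hkey := MX1aux.key_eq (MX1aux.uS_one_le S) (MX1aux.uS_one_le T)
    h hch hch' hLpt hMpt hexp
  apply hST
  ext k
  have hk := hkey k
  by_cases h1 : k ∈ S <;> by_cases h2 : k ∈ T
  · simp [h1, h2]
  · exfalso; simp [MX1aux.uS, h1, h2] at hk
  · exfalso; simp [MX1aux.uS, h1, h2] at hk
  · simp [h1, h2]
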